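/- Suppose a type D spacetime satisfies the Bianchi-derived equations (3α + 2χ) Q_v = v ⊗ h(dα) and (3α − 2χ) Q_h = h ⊗ v(dα), where α is the (real) Weyl eigenvalue, χ the Ricci eigenvalue function, and Q_v, Q_h the generalized second fundamental forms of the principal planes. If (3α)² ≠ (2χ)² everywhere, then both principal planes are umbilical and both are foliations: the antisymmetric parts A_v, A_h and the traceless symmetric parts S_v^T, S_h^T of Q_v, Q_h all vanish. -/
import Mathlib


/-- pointwise index model: if a type D spacetime satisfies the
Bianchi-derived equations `(3α + 2χ) Q_v = v ⊗ h(dα)` and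
`(3α − 2χ) Q_h = h ⊗ v(dα)`, and `(3α)² ≠ (2χ)²` everywhere, then both
principal planes are umbilical and both are foliations: the antisymmetric
parts `A_v`, `A_h` and the traceless symmetric parts `S_v^T`, `S_h^T` of the
generalized second fundamental forms `Q_v`, `Q_h` all vanish. -/
theorem stmt_17
    (g ginv v h vcov hcov : Fin 4 → Fin 4 → ℝ)
    (α χ : ℝ)
    (hgsym : ∀ a b, g a b = g b a)
    (hginvsym : ∀ a b, ginv a b = ginv b a)
    (hginv : ∀ a b, ∑ e, g a e * ginv e b = if a = b then (1 : ℝ) else 0)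
    (hvcov : ∀ a b, vcov a b = ∑ e, g a e * v e b)
    (hhcov : ∀ a b, hcov a b = ∑ e, g a e * h e b)
    (hvcovsym : ∀ a b, vcov a b = vcov b a)
    (hhcovsym : ∀ a b, hcov a b = hcov b a)
    -- the principal planes are 2-dimensional: p = 2 for both
    (htrv : (∑ a, ∑ b, ginv a b * vcov a b) = 2)
    (htrh : (∑ a, ∑ b, ginv a b * hcov a b) = 2)
    (dα hdα vdα : Fin 4 → ℝ)
    (hhdα : ∀ b, hdα b = ∑ a, dα a * h a b)
    (hvdα : ∀ b, vdα b = ∑ a, dα a * v a b)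
    (Qv Qh : Fin 4 → Fin 4 → Fin 4 → ℝ)
    -- Bianchi-derived equations
    (hBv : ∀ a b e, (3 * α + 2 * χ) * Qv a b e = vcov a b * hdα e)
    (hBh : ∀ a b e, (3 * α - 2 * χ) * Qh a b e = hcov a b * vdα e)
    (hne : (3 * α) ^ 2 ≠ (2 * χ) ^ 2)
    (Av Ah Sv Sh SvT ShT : Fin 4 → Fin 4 → Fin 4 → ℝ)
    (TrSv TrSh : Fin 4 → ℝ)
    (hAv : ∀ a b e, Av a b e = (Qv a b e - Qv b a e) / 2)
    (hAh : ∀ a b e, Ah a b e = (Qh a b e - Qh b a e) / 2)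
    (hSv : ∀ a b e, Sv a b e = (Qv a b e + Qv b a e) / 2)
    (hSh : ∀ a b e, Sh a b e = (Qh a b e + Qh b a e) / 2)
    (hTrSv : ∀ e, TrSv e = ∑ a, ∑ b, ginv a b * Sv a b e)
    (hTrSh : ∀ e, TrSh e = ∑ a, ∑ b, ginv a b * Sh a b e)
    (hSvT : ∀ a b e, SvT a b e = Sv a b e - (1/2) * vcov a b * TrSv e)
    (hShT : ∀ a b e, ShT a b e = Sh a b e - (1/2) * hcov a b * TrSh e) :
    (∀ a b e, Av a b e = 0) ∧ (∀ a b e, Ah a b e = 0)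
    ∧ (∀ a b e, SvT a b e = 0) ∧ (∀ a b e, ShT a b e = 0) := by
  have hcp : (3 * α + 2 * χ) ≠ 0 := by
    intro h0; apply hne; rw [show (3*α) = -(2*χ) from by linarith]; ring
  have hcm : (3 * α - 2 * χ) ≠ 0 := by
    intro h0; apply hne; rw [show (3*α) = (2*χ) from by linarith]
  have hQv : ∀ a b e, Qv a b e = vcov a b * hdα e / (3 * α + 2 * χ) := by
    intro a b e
    field_simp
    linarith [hBv a b e]
  have hQh : ∀ a b e, Qh a b e = hcov a b * vdα e / (3 * α - 2 * χ) := by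
    intro a b e
    field_simp
    linarith [hBh a b e]
  have hSveq : ∀ a b e, Sv a b e = vcov a b * hdα e / (3 * α + 2 * χ) := by
    intro a b e
    rw [hSv, hQv, hQv, hvcovsym b a]; ring
  have hSheq : ∀ a b e, Sh a b e = hcov a b * vdα e / (3 * α - 2 * χ) := by
    intro a b e
    rw [hSh, hQh, hQh, hhcovsym b a]; ring
  have hTrSveq : ∀ e, TrSv e = 2 * (hdα e / (3 * α + 2 * χ)) := by
    intro e
    rw [hTrSv]
    have : ∑ a, ∑ b, ginv a b * Sv a b e
        = (∑ a, ∑ b, ginv a b * vcov a b) * (hdα e / (3 * α + 2 * χ)) := by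
      rw [Finset.sum_mul]
      refine Finset.sum_congr rfl fun a _ => ?_
      rw [Finset.sum_mul]
      refine Finset.sum_congr rfl fun b _ => ?_
      rw [hSveq]; ring
    rw [this, htrv]
  have hTrSheq : ∀ e, TrSh e = 2 * (vdα e / (3 * α - 2 * χ)) := by
    intro e
    rw [hTrSh]
    have : ∑ a, ∑ b, ginv a b * Sh a b e
        = (∑ a, ∑ b, ginv a b * hcov a b) * (vdα e / (3 * α - 2 * χ)) := by
      rw [Finset.sum_mul]
      refine Finset.sum_congr rfl fun a _ => ?_
      rw [Finset.sum_mul]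
      refine Finset.sum_congr rfl fun b _ => ?_
      rw [hSheq]; ring
    rw [this, htrh]
  refine ⟨?_, ?_, ?_, ?_⟩
  · intro a b e; rw [hAv, hQv, hQv, hvcovsym b a]; ring
  · intro a b e; rw [hAh, hQh, hQh, hhcovsym b a]; ring
  · intro a b e; rw [hSvT, hSveq, hTrSveq]; ring
  · intro a b e; rw [hShT, hSheq, hTrSheq]; ring
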